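/- arXiv:1403.4275 — 4 statements merged into one kernel-verified Lean document; each statement's English description precedes it below -/
import Mathlib

section
/- Let X, Y, H be as follows: H a real Hilbert space, X and Y Banach spaces with continuous injections X ↪ Y ↪ H having dense images, and T : X → Y a bounded Fredholm operator that is symmetric with respect to the inner product of H (i.e., ⟨T x₁, x₂⟩ = ⟨x₁, T x₂⟩ for all x₁, x₂ ∈ X). Let T* : Y* → X* denote the adjoint extension (using the identification H ≅ H* and the chain X ↪ Y ↪ H = H* ↪ Y* ↪ X*). If T satisfies the ellipticity hypothesis that for all x ∈ Y*, T*(x) ∈ Y implies x ∈ X, then the Fredholm index of T is zero. -/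
set_option maxHeartbeats 1000000


/-- Equivariant setup for symmetric Fredholm operators: if `X ↪ Y ↪ H` are continuous
dense injections into a real Hilbert space, `T : X → Y` is bounded Fredholm and symmetric
for the inner product of `H`, and `T` satisfies the ellipticity hypothesis that every
weak solution lies in `X` (i.e. `(T*)⁻¹(Y) ⊆ X`), then the Fredholm index of `T` is zero. -/
theorem index_zero_of_symmetric_elliptic_fredholm
    {X Y H : Type*}
    [NormedAddCommGroup X] [NormedSpace ℝ X] [CompleteSpace X]
    [NormedAddCommGroup Y] [NormedSpace ℝ Y] [CompleteSpace Y]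
    [NormedAddCommGroup H] [InnerProductSpace ℝ H] [CompleteSpace H]
    (iX : X →L[ℝ] Y) (iY : Y →L[ℝ] H)
    (hiX : Function.Injective iX) (hiY : Function.Injective iY)
    (hdX : DenseRange iX) (hdY : DenseRange iY)
    (T : X →L[ℝ] Y)
    -- Fredholm hypotheses
    (hker : FiniteDimensional ℝ (LinearMap.ker (T : X →ₗ[ℝ] Y)))
    (hcl : IsClosed (LinearMap.range (T : X →ₗ[ℝ] Y) : Set Y))
    (hcoker : FiniteDimensional ℝ (Y ⧸ LinearMap.range (T : X →ₗ[ℝ] Y)))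
    -- symmetry with respect to the inner product of `H`
    (hsym : ∀ x₁ x₂ : X,
      (inner ℝ (iY (T x₁)) (iY (iX x₂)) : ℝ) = inner ℝ (iY (iX x₁)) (iY (T x₂)))
    -- ellipticity: if `T* φ ∈ Y` then `φ ∈ X`
    (hell : ∀ φ : Y →L[ℝ] ℝ,
      (∃ y : Y, ∀ x : X, φ (T x) = (inner ℝ (iY y) (iY (iX x)) : ℝ)) →
      ∃ ξ : X, ∀ y' : Y, φ y' = (inner ℝ (iY (iX ξ)) (iY y') : ℝ)) :
    Module.finrank ℝ (LinearMap.ker (T : X →ₗ[ℝ] Y)) =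
      Module.finrank ℝ (Y ⧸ LinearMap.range (T : X →ₗ[ℝ] Y)) := by
  classical
  haveI := hker
  haveI := hcoker
  -- density of the composite embedding
  have hdense : DenseRange (iY ∘ iX) := hdY.comp hdX iY.continuous
  -- vanishing lemma against the dense image
  have lemB : ∀ v : H, (∀ x : X, (inner ℝ v (iY (iX x)) : ℝ) = 0) → v = 0 := by
    intro v hv
    have hcont : Continuous fun h : H => (inner ℝ v h : ℝ) :=
      continuous_const.inner continuous_id
    have heq : (fun h : H => (inner ℝ v h : ℝ)) = fun _ => (0 : ℝ) := by
      refine Continuous.ext_on hdense hcont continuous_const ?_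
      rintro _ ⟨x, rfl⟩
      exact hv x
    have : (inner ℝ v v : ℝ) = 0 := congrFun heq v
    exact inner_self_eq_zero.mp this
  -- injectivity lemma
  have lemA : ∀ ξ : X, (∀ y : Y, (inner ℝ (iY (iX ξ)) (iY y) : ℝ) = 0) → ξ = 0 := by
    intro ξ hξ
    have h1 : (inner ℝ (iY (iX ξ)) (iY (iX ξ)) : ℝ) = 0 := hξ (iX ξ)
    have h2 : iY (iX ξ) = 0 := inner_self_eq_zero.mp h1
    have h3 : iX ξ = 0 := hiY (by simpa using h2)
    exact hiX (by simpa using h3)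
  -- the annihilator of `range T` inside the continuous dual of `Y`
  let S : Submodule ℝ (Y →L[ℝ] ℝ) :=
    { carrier := {φ | ∀ x : X, φ (T x) = 0}
      add_mem' := fun ha hb x => by
        rw [ContinuousLinearMap.add_apply, ha x, hb x, add_zero]
      zero_mem' := fun x => rfl
      smul_mem' := fun c {φ} hφ x => by
        rw [ContinuousLinearMap.coe_smul', Pi.smul_apply, hφ x, smul_zero] }
  have memS : ∀ φ : Y →L[ℝ] ℝ, φ ∈ S ↔ ∀ x : X, φ (T x) = 0 := fun φ => Iff.rfl
  -- the map `ker T → S`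
  let g : LinearMap.ker (T : X →ₗ[ℝ] Y) →ₗ[ℝ] (Y →L[ℝ] ℝ) :=
    { toFun := fun ξ => (innerSL ℝ (iY (iX (ξ : X)))).comp iY
      map_add' := fun a b => by
        ext y
        simp [inner_add_left]
      map_smul' := fun c a => by
        ext y
        simp [inner_smul_left] }
  have hgS : ∀ ξ : LinearMap.ker (T : X →ₗ[ℝ] Y), g ξ ∈ S := by
    intro ξ x
    have h0 : T (ξ : X) = 0 := ξ.2
    show (inner ℝ (iY (iX (ξ : X))) (iY (T x)) : ℝ) = 0
    rw [← hsym (ξ : X) x, h0]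
    simp
  let g' : LinearMap.ker (T : X →ₗ[ℝ] Y) →ₗ[ℝ] S := g.codRestrict S hgS
  have hg'inj : Function.Injective g' := by
    intro a b hab
    have h : ∀ y : Y, (inner ℝ (iY (iX ((a : X) - (b : X)))) (iY y) : ℝ) = 0 := by
      intro y
      have h2 : (inner ℝ (iY (iX ((a : X)))) (iY y) : ℝ) =
          inner ℝ (iY (iX ((b : X)))) (iY y) :=
        congrArg (fun ψ : S => (ψ : Y →L[ℝ] ℝ) y) hab
      simp [map_sub, inner_sub_left, h2]
    have := lemA _ h
    exact Subtype.ext (sub_eq_zero.mp this)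
  have hg'surj : Function.Surjective g' := by
    rintro ⟨φ, hφ⟩
    obtain ⟨ξ, hξ⟩ := hell φ ⟨0, fun x => by simpa using hφ x⟩
    have hTξ : T ξ = 0 := by
      have hv : ∀ x : X, (inner ℝ (iY (T ξ)) (iY (iX x)) : ℝ) = 0 := by
        intro x
        rw [hsym ξ x, ← hξ (T x)]
        exact hφ x
      have := lemB _ hv
      exact hiY (by simpa using this)
    refine ⟨⟨ξ, hTξ⟩, ?_⟩
    apply Subtype.ext
    ext y
    exact (hξ y).symm
  have e1 : Module.finrank ℝ (LinearMap.ker (T : X →ₗ[ℝ] Y)) = Module.finrank ℝ S :=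
    LinearEquiv.finrank_eq (LinearEquiv.ofBijective g' ⟨hg'inj, hg'surj⟩)
  haveI : FiniteDimensional ℝ S :=
    Module.Finite.equiv (LinearEquiv.ofBijective g' ⟨hg'inj, hg'surj⟩)
  -- `S` embeds into the dual of the cokernel
  let L : S →ₗ[ℝ] Module.Dual ℝ (Y ⧸ LinearMap.range (T : X →ₗ[ℝ] Y)) :=
    { toFun := fun φ => (LinearMap.range (T : X →ₗ[ℝ] Y)).liftQ ((φ : Y →L[ℝ] ℝ) : Y →ₗ[ℝ] ℝ)
        (by rintro _ ⟨x, rfl⟩; exact φ.2 x)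
      map_add' := fun a b => by
        apply LinearMap.ext; intro q
        obtain ⟨y, rfl⟩ := Submodule.Quotient.mk_surjective _ q
        simp
      map_smul' := fun c a => by
        apply LinearMap.ext; intro q
        obtain ⟨y, rfl⟩ := Submodule.Quotient.mk_surjective _ q
        simp }
    
  have hLinj : Function.Injective L := by
    intro a b hab
    apply Subtype.ext
    ext y
    have := congrArg (fun ψ : Module.Dual ℝ (Y ⧸ LinearMap.range (T : X →ₗ[ℝ] Y)) =>
      ψ (Submodule.Quotient.mk y)) hab
    simpa [L] using this
  have hle1 : Module.finrank ℝ S ≤ Module.finrank ℝ (Y ⧸ LinearMap.range (T : X →ₗ[ℝ] Y)) := by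
    have := LinearMap.finrank_le_finrank_of_injective hLinj
    rwa [Subspace.dual_finrank_eq] at this
  -- the cokernel embeds into the dual of `S`, using Hahn–Banach
  let ev : Y →ₗ[ℝ] Module.Dual ℝ S :=
    { toFun := fun y =>
        { toFun := fun φ => (φ : Y →L[ℝ] ℝ) y
          map_add' := fun a b => by simp
          map_smul' := fun c a => by simp }
      map_add' := fun y1 y2 => LinearMap.ext fun φ => by simp
      map_smul' := fun c y => LinearMap.ext fun φ => by simp }
  have hev : LinearMap.range (T : X →ₗ[ℝ] Y) ≤ LinearMap.ker ev := by
    rintro _ ⟨x, rfl⟩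
    apply LinearMap.mem_ker.mpr
    apply LinearMap.ext
    intro φ
    exact φ.2 x
  let E : (Y ⧸ LinearMap.range (T : X →ₗ[ℝ] Y)) →ₗ[ℝ] Module.Dual ℝ S :=
    (LinearMap.range (T : X →ₗ[ℝ] Y)).liftQ ev hev
  have hEinj : Function.Injective E := by
    rw [← LinearMap.ker_eq_bot]
    rw [Submodule.ker_liftQ]
    rw [Submodule.eq_bot_iff]
    intro q hq
    obtain ⟨y, rfl⟩ := Submodule.Quotient.mk_surjective _ q
    rw [Submodule.mem_map] at hq
    obtain ⟨y', hy', hyy'⟩ := hq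
    -- reduce to: if `ev y = 0` then `y ∈ range T`
    suffices hsuff : ∀ z : Y, ev z = 0 → z ∈ LinearMap.range (T : X →ₗ[ℝ] Y) by
      have : Submodule.Quotient.mk (p := LinearMap.range (T : X →ₗ[ℝ] Y)) y' =
          Submodule.Quotient.mk y := hyy'
      rw [← this]
      rw [Submodule.Quotient.mk_eq_zero]
      exact hsuff y' (LinearMap.mem_ker.mp hy')
    intro z hz
    by_contra hznot
    obtain ⟨f, s, hfs, hfb⟩ := geometric_hahn_banach_point_closed
      (t := (LinearMap.range (T : X →ₗ[ℝ] Y) : Set Y)) (Submodule.convex _) hcl hznot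
    -- `f` vanishes on `range T`
    have hf0 : ∀ b ∈ LinearMap.range (T : X →ₗ[ℝ] Y), f b = 0 := by
      intro b hb
      by_contra hfb0
      -- scale to contradict the lower bound
      have key : ∀ c : ℝ, s < c * f b := by
        intro c
        have : (c • b) ∈ LinearMap.range (T : X →ₗ[ℝ] Y) := Submodule.smul_mem _ c hb
        have := hfb _ this
        simpa [mul_comm] using this
      rcases lt_or_gt_of_ne hfb0 with hneg | hpos
      · have := key ((s - 1) / f b)
        rw [div_mul_cancel₀ _ hfb0] at this
        linarith
      · have := key ((s - 1) / f b)
        rw [div_mul_cancel₀ _ hfb0] at this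
        linarith
    have hfS : f ∈ S := fun x => hf0 _ ⟨x, rfl⟩
    have hs0 : s < 0 := by
      have h00 : (0 : Y) ∈ LinearMap.range (T : X →ₗ[ℝ] Y) := Submodule.zero_mem _
      have := hfb 0 h00
      simpa using this
    have hfz : f z = 0 := DFunLike.congr_fun hz ⟨f, hfS⟩
    rw [hfz] at hfs
    linarith
  have hle2 : Module.finrank ℝ (Y ⧸ LinearMap.range (T : X →ₗ[ℝ] Y)) ≤ Module.finrank ℝ S := by
    haveI : Module.Free ℝ S := Module.Free.of_divisionRing ℝ S
    haveI : Module.Finite ℝ (Module.Dual ℝ S) := (Module.finite_dual_iff ℝ).mpr inferInstance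
    have := LinearMap.finrank_le_finrank_of_injective hEinj
    exact this.trans (Subspace.dual_finrank_eq (K := ℝ) (V := S)).le
  rw [e1]
  exact le_antisymm hle1 hle2
end

section
/- Under the hypotheses of the ellipticity proposition (X ↪ Y ↪ H continuous dense inclusions, T : X → Y bounded Fredholm, symmetric for the H-inner product, and (T*)⁻¹(Y) ⊆ X), the Banach space Y decomposes as the direct sum Y = Im(T) ⊕ ker(T), and Im(T) and ker(T) are orthogonal with respect to the inner product of H. -/
/-- Under the hypotheses of the ellipticity proposition, `Y` decomposes as the direct sum
of `Im(T)` and `ker(T)` (the latter viewed in `Y` via the inclusion `X ↪ Y`), and these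
two subspaces are orthogonal with respect to the inner product of `H`. -/
theorem decomposition_of_symmetric_elliptic_fredholm
    {X Y H : Type*}
    [NormedAddCommGroup X] [NormedSpace ℝ X] [CompleteSpace X]
    [NormedAddCommGroup Y] [NormedSpace ℝ Y] [CompleteSpace Y]
    [NormedAddCommGroup H] [InnerProductSpace ℝ H] [CompleteSpace H]
    (iX : X →L[ℝ] Y) (iY : Y →L[ℝ] H)
    (hiX : Function.Injective iX) (hiY : Function.Injective iY)
    (hdX : DenseRange iX) (hdY : DenseRange iY)
    (T : X →L[ℝ] Y)
    -- Fredholm hypotheses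
    (hker : FiniteDimensional ℝ (LinearMap.ker (T : X →ₗ[ℝ] Y)))
    (hcl : IsClosed (LinearMap.range (T : X →ₗ[ℝ] Y) : Set Y))
    (hcoker : FiniteDimensional ℝ (Y ⧸ LinearMap.range (T : X →ₗ[ℝ] Y)))
    -- symmetry with respect to the inner product of `H`
    (hsym : ∀ x₁ x₂ : X,
      (inner ℝ (iY (T x₁)) (iY (iX x₂)) : ℝ) = inner ℝ (iY (iX x₁)) (iY (T x₂)))
    -- ellipticity: if `T* φ ∈ Y` then `φ ∈ X`
    (hell : ∀ φ : Y →L[ℝ] ℝ,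
      (∃ y : Y, ∀ x : X, φ (T x) = (inner ℝ (iY y) (iY (iX x)) : ℝ)) →
      ∃ ξ : X, ∀ y' : Y, φ y' = (inner ℝ (iY (iX ξ)) (iY y') : ℝ)) :
    IsCompl (LinearMap.range (T : X →ₗ[ℝ] Y)) ((LinearMap.ker (T : X →ₗ[ℝ] Y)).map iX.toLinearMap) ∧
      ∀ y ∈ LinearMap.range (T : X →ₗ[ℝ] Y), ∀ z ∈ (LinearMap.ker (T : X →ₗ[ℝ] Y)).map iX.toLinearMap,
        (inner ℝ (iY y) (iY z) : ℝ) = 0 := by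
  set K : Submodule ℝ Y := (LinearMap.ker (T : X →ₗ[ℝ] Y)).map iX.toLinearMap with hKdef
  set R : Submodule ℝ Y := LinearMap.range (T : X →ₗ[ℝ] Y) with hRdef
  -- orthogonality
  have horth : ∀ y ∈ R, ∀ z ∈ K, (inner ℝ (iY y) (iY z) : ℝ) = 0 := by
    rintro y ⟨x₁, rfl⟩ z ⟨x₂, hx₂, rfl⟩
    have hx₂' : T x₂ = 0 := hx₂
    simp only [ContinuousLinearMap.coe_coe]
    rw [hsym x₁ x₂, hx₂']
    simp
  refine ⟨⟨?_, ?_⟩, horth⟩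
  · -- disjointness
    rw [Submodule.disjoint_def]
    intro y hyR hyK
    have h0 : (inner ℝ (iY y) (iY y) : ℝ) = 0 := horth y hyR y hyK
    have := inner_self_eq_zero.mp h0
    exact hiY (by simpa using this)
  · -- codisjointness
    haveI : IsClosed (R : Set Y) := hcl
    haveI : FiniteDimensional ℝ (Y ⧸ R) := hcoker
    set P : Submodule ℝ (Y ⧸ R) := K.map R.mkQ with hPdef
    have hP : P = ⊤ := by
      by_contra hne
      obtain ⟨g, hg0, hgker⟩ :=
        Submodule.exists_dual_map_eq_bot_of_lt_top (lt_top_iff_ne_top.mpr hne) inferInstance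
      have gc : Continuous g := g.continuous_of_finiteDimensional
      set φ : Y →L[ℝ] ℝ := ⟨g ∘ₗ R.mkQ, gc.comp continuous_quot_mk⟩ with hφdef
      have hφT : ∀ x : X, φ (T x) = 0 := by
        intro x
        have hmk : R.mkQ (T x) = 0 :=
          (Submodule.Quotient.mk_eq_zero _).mpr (LinearMap.mem_range_self (T : X →ₗ[ℝ] Y) x)
        show g (R.mkQ (T x)) = 0
        rw [hmk, map_zero]
      obtain ⟨ξ, hξ⟩ := hell φ ⟨0, fun x => by simp [hφT x]⟩
      have hTξ : ∀ x : X, (inner ℝ (iY (T ξ)) (iY (iX x)) : ℝ) = 0 := fun x => by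
        rw [hsym ξ x, ← hξ (T x), hφT x]
      have hinner : ∀ h : H, (inner ℝ (iY (T ξ)) h : ℝ) = 0 := by
        have hdense : DenseRange (⇑iY ∘ ⇑iX) := hdY.comp hdX iY.continuous
        have hcont : Continuous fun h : H => (inner ℝ (iY (T ξ)) h : ℝ) :=
          continuous_const.inner continuous_id
        intro h
        refine hdense.induction_on h (isClosed_eq hcont continuous_const) fun x => ?_
        exact hTξ x
      have hTξ0 : T ξ = 0 := by
        have := inner_self_eq_zero.mp (hinner (iY (T ξ)))
        exact hiY (by simpa using this)
      have hiXξK : iX ξ ∈ K := ⟨ξ, by simpa [LinearMap.mem_ker] using hTξ0, rfl⟩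
      have hφiXξ : φ (iX ξ) = 0 := by
        have hmem : R.mkQ (iX ξ) ∈ P := Submodule.mem_map_of_mem hiXξK
        have h2 : g (R.mkQ (iX ξ)) ∈ P.map g := Submodule.mem_map_of_mem hmem
        rw [hgker] at h2
        show g (R.mkQ (iX ξ)) = 0
        simpa using h2
      have h0 : (inner ℝ (iY (iX ξ)) (iY (iX ξ)) : ℝ) = 0 := by
        rw [← hξ (iX ξ)]; exact hφiXξ
      have hiY0 : iY (iX ξ) = 0 := inner_self_eq_zero.mp h0
      have hφ0 : ∀ y' : Y, φ y' = 0 := fun y' => by rw [hξ y', hiY0, inner_zero_left]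
      apply hg0
      have : ∀ q : Y ⧸ R, g q = 0 := by
        intro q
        obtain ⟨y', rfl⟩ := R.mkQ_surjective q
        exact hφ0 y'
      exact LinearMap.ext fun q => by rw [this q, LinearMap.zero_apply]
    rw [codisjoint_iff, eq_top_iff]
    intro y _
    have hy : R.mkQ y ∈ P := hP ▸ Submodule.mem_top
    obtain ⟨z, hzK, hz⟩ := hy
    have hsub : y - z ∈ R := by
      have : z - y ∈ R := (Submodule.Quotient.eq R).mp hz
      simpa using R.neg_mem this
    have : (y - z) + z ∈ R ⊔ K := Submodule.add_mem_sup hsub hzK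
    simpa using this
end

section
/- There exist a Hilbert space H, Banach spaces X and Y with continuous dense inclusions X ↪ Y ↪ H, and a bounded Fredholm operator T : X → Y that is symmetric with respect to the inner product of H, such that the Fredholm index of T is −1 (in particular, nonzero). -/
open scoped ENNReal

noncomputable section FredholmExample

/-- The Hilbert space `ℓ²(ℕ, ℝ)`. -/
abbrev Ell : Type := lp (fun _ : ℕ => ℝ) 2

/-- The Hilbert space `ℓ² ×₂ ℝ`. -/
abbrev HS : Type := WithLp 2 (Ell × ℝ)

lemma pow_eq_rpow (x : ℝ) : x ^ (2:ℝ≥0∞).toReal = x ^ (2:ℕ) := by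
  rw [show ((2:ℝ≥0∞).toReal) = ((2:ℕ):ℝ) by norm_num, Real.rpow_natCast]

/-- The weight sequence `w n = 1/(n+1)`. -/
def wseq : ℕ → ℝ := fun n => ((n : ℝ) + 1)⁻¹

lemma wseq_pos (n : ℕ) : 0 < wseq n := by rw [wseq]; positivity

lemma wseq_ne_zero (n : ℕ) : wseq n ≠ 0 := (wseq_pos n).ne'

lemma wseq_le_one (n : ℕ) : wseq n ≤ 1 := by
  rw [wseq, inv_le_one_iff₀]; right; linarith [Nat.cast_nonneg (α := ℝ) n]

lemma wseq_abs_le_one (n : ℕ) : |wseq n| ≤ 1 := by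
  rw [abs_of_pos (wseq_pos n)]; exact wseq_le_one n

lemma wseq_sq_summable : Summable (fun n : ℕ => ‖wseq n‖ ^ (2:ℝ≥0∞).toReal) := by
  have h : Summable (fun n : ℕ => (((n:ℝ)) ^ 2)⁻¹) := Real.summable_nat_pow_inv.mpr one_lt_two
  have h2 : Summable (fun n : ℕ => ((((n+1):ℕ):ℝ) ^ 2)⁻¹) := (summable_nat_add_iff 1).mpr h
  refine h2.congr fun n => ?_
  rw [wseq, pow_eq_rpow]
  push_cast
  rw [Real.norm_eq_abs, abs_of_pos (by positivity), ← inv_pow]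

lemma wseq_mem : Memℓp wseq 2 := memℓp_gen wseq_sq_summable

/-- The weight sequence as an element of `ℓ²`. -/
def Wel : Ell := ⟨wseq, wseq_mem⟩

@[simp] lemma Wel_apply (n : ℕ) : Wel n = wseq n := rfl

lemma mul_mem (g : Ell) : Memℓp (fun n => wseq n * g n) 2 := by
  apply memℓp_gen
  have hg : Summable (fun n => ‖g n‖ ^ (2:ℝ≥0∞).toReal) :=
    (lp.memℓp g).summable (by norm_num)
  refine Summable.of_nonneg_of_le (fun n => by rw [pow_eq_rpow]; positivity) (fun n => ?_) hg
  rw [pow_eq_rpow, pow_eq_rpow]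
  apply pow_le_pow_left₀ (norm_nonneg _)
  rw [Real.norm_eq_abs, Real.norm_eq_abs, abs_mul]
  calc |wseq n| * |g n| ≤ 1 * |g n| :=
        mul_le_mul_of_nonneg_right (wseq_abs_le_one n) (abs_nonneg _)
    _ = |g n| := one_mul _

/-- Multiplication by the weight sequence, as a bounded operator on `ℓ²`. -/
def Mop : Ell →L[ℝ] Ell :=
  LinearMap.mkContinuous
    { toFun := fun g => ⟨fun n => wseq n * g n, mul_mem g⟩
      map_add' := fun g h => by
        ext n
        simp [lp.coeFn_add, mul_add]
        rfl
      map_smul' := fun c g => by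
        ext n
        simp [lp.coeFn_smul]
        ring }
    1 (fun g => by
      rw [one_mul]
      apply lp.norm_le_of_forall_sum_le (by norm_num) (norm_nonneg g)
      intro s
      have hs : HasSum (fun n => ‖g n‖ ^ (2:ℝ≥0∞).toReal) (‖g‖ ^ (2:ℝ≥0∞).toReal) :=
        lp.hasSum_norm (by norm_num) g
      calc ∑ i ∈ s, ‖(⟨fun n => wseq n * g n, mul_mem g⟩ : Ell) i‖ ^ (2:ℝ≥0∞).toReal
          ≤ ∑ i ∈ s, ‖g i‖ ^ (2:ℝ≥0∞).toReal := by
            refine Finset.sum_le_sum fun i _ => ?_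
            rw [pow_eq_rpow, pow_eq_rpow]
            apply pow_le_pow_left₀ (norm_nonneg _)
            rw [Real.norm_eq_abs, Real.norm_eq_abs, abs_mul]
            calc |wseq i| * |g i| ≤ 1 * |g i| :=
                  mul_le_mul_of_nonneg_right (wseq_abs_le_one i) (abs_nonneg _)
              _ = |g i| := one_mul _
        _ ≤ ‖g‖ ^ (2:ℝ≥0∞).toReal :=
            sum_le_hasSum s (fun i _ => by rw [pow_eq_rpow]; positivity) hs)

@[simp] lemma Mop_apply (g : Ell) (n : ℕ) : (Mop g) n = wseq n * g n := rfl

/-- The identification `ℓ² ×₂ ℝ ≃ ℓ² × ℝ`. -/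
def Eq2 : HS ≃L[ℝ] Ell × ℝ := WithLp.prodContinuousLinearEquiv 2 ℝ Ell ℝ

/-- The operator `T : ℓ² → ℓ² ×₂ ℝ`, `g ↦ (g, 0)`. -/
def Tmap : Ell →L[ℝ] HS :=
  (Eq2.symm : Ell × ℝ →L[ℝ] HS).comp (ContinuousLinearMap.inl ℝ Ell ℝ)

@[simp] lemma Tmap_apply (g : Ell) : Tmap g = Eq2.symm (g, 0) := rfl

/-- The functional `α(g) = ⟪w, g⟫`. -/
def alphaF : Ell →L[ℝ] ℝ := innerSL ℝ Wel

@[simp] lemma alphaF_apply (g : Ell) : alphaF g = inner ℝ Wel g := rfl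

/-- The embedding `iX : ℓ² → ℓ² ×₂ ℝ`, `g ↦ (w·g, α g)`. -/
def iXmap : Ell →L[ℝ] HS :=
  (Eq2.symm : Ell × ℝ →L[ℝ] HS).comp (Mop.prod alphaF)

@[simp] lemma iXmap_apply (g : Ell) : iXmap g = Eq2.symm (Mop g, alphaF g) := rfl

@[simp] lemma Tmap_fst (g : Ell) : (Tmap g).fst = g := rfl
@[simp] lemma Tmap_snd (g : Ell) : (Tmap g).snd = 0 := rfl
@[simp] lemma iXmap_fst (g : Ell) : (iXmap g).fst = Mop g := rfl
@[simp] lemma iXmap_snd (g : Ell) : (iXmap g).snd = alphaF g := rfl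

/-- projection onto the second factor. -/
def piS : HS →L[ℝ] ℝ :=
  (ContinuousLinearMap.snd ℝ Ell ℝ).comp (Eq2 : HS →L[ℝ] Ell × ℝ)

@[simp] lemma piS_apply (x : HS) : piS x = (Eq2 x).2 := rfl

lemma piS_surj : Function.Surjective piS := fun t => ⟨Eq2.symm (0, t), by simp [piS]⟩

lemma range_Tmap : LinearMap.range (Tmap : Ell →ₗ[ℝ] HS) = LinearMap.ker (piS : HS →ₗ[ℝ] ℝ) := by
  ext x
  simp only [LinearMap.mem_range, LinearMap.mem_ker]
  constructor
  · rintro ⟨g, rfl⟩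
    simp [piS, Eq2]
  · intro hx
    refine ⟨(Eq2 x).1, ?_⟩
    rw [ContinuousLinearMap.coe_coe, Tmap_apply]
    conv_rhs => rw [← Eq2.symm_apply_apply x]
    congr 1
    exact Prod.ext rfl hx.symm

lemma Tmap_inj : Function.Injective Tmap := by
  intro a b h
  simpa using congrArg (fun x => (Eq2 x).1) h

lemma ker_Tmap : LinearMap.ker (Tmap : Ell →ₗ[ℝ] HS) = ⊥ := LinearMap.ker_eq_bot.mpr Tmap_inj

lemma closed_range_Tmap : IsClosed (LinearMap.range (Tmap : Ell →ₗ[ℝ] HS) : Set HS) := by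
  have : (LinearMap.range (Tmap : Ell →ₗ[ℝ] HS) : Set HS) = (LinearMap.ker (piS : HS →ₗ[ℝ] ℝ) : Set HS) := by
    rw [range_Tmap]
  rw [this]
  exact ContinuousLinearMap.isClosed_ker piS

/-- The cokernel of `T` is isomorphic to `ℝ`. -/
def cokerEquiv : (HS ⧸ LinearMap.range (Tmap : Ell →ₗ[ℝ] HS)) ≃ₗ[ℝ] ℝ :=
  (Submodule.quotEquivOfEq _ _ range_Tmap).trans
    ((piS : HS →ₗ[ℝ] ℝ).quotKerEquivOfSurjective piS_surj)

lemma coker_findim : FiniteDimensional ℝ (HS ⧸ LinearMap.range (Tmap : Ell →ₗ[ℝ] HS)) :=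
  Module.Finite.equiv cokerEquiv.symm

lemma coker_finrank : Module.finrank ℝ (HS ⧸ LinearMap.range (Tmap : Ell →ₗ[ℝ] HS)) = 1 := by
  rw [cokerEquiv.finrank_eq, Module.finrank_self]

lemma ker_finrank : Module.finrank ℝ (LinearMap.ker (Tmap : Ell →ₗ[ℝ] HS)) = 0 := by
  rw [ker_Tmap, finrank_bot]

lemma iXmap_inj : Function.Injective iXmap := by
  intro a b h
  have hM : Mop a = Mop b := by
    simpa using congrArg (fun x => (Eq2 x).1) h
  ext n
  have := congrArg (fun g : Ell => g n) hM
  simp only [Mop_apply] at this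
  exact mul_left_cancel₀ (wseq_ne_zero n) this

/-- Symmetry of the multiplication operator. -/
lemma Mop_symm (a b : Ell) : (inner ℝ a (Mop b) : ℝ) = inner ℝ (Mop a) b := by
  rw [lp.inner_eq_tsum, lp.inner_eq_tsum]
  exact tsum_congr fun n => by
    simp only [Mop_apply, RCLike.inner_apply, conj_trivial]
    ring

/-! ### Density of the range of `iX` -/

/-- The canonical basis vectors of `ℓ²`. -/
def eBas (n : ℕ) : Ell := lp.single 2 n 1

lemma Mop_eBas (n : ℕ) : Mop (eBas n) = wseq n • eBas n := by
  ext m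
  rw [Mop_apply]
  rcases eq_or_ne m n with rfl | hmn
  · simp [eBas, lp.single_apply_self, lp.coeFn_smul]
  · simp [eBas, lp.single_apply_ne _ _ _ hmn, lp.coeFn_smul, Pi.single_eq_of_ne hmn]

lemma alphaF_eBas (n : ℕ) : alphaF (eBas n) = wseq n := by
  rw [alphaF_apply, eBas, lp.inner_single_right]
  simp

lemma iX_basis (n : ℕ) : iXmap ((wseq n)⁻¹ • eBas n) = Eq2.symm (eBas n, 1) := by
  rw [iXmap_apply]
  congr 1
  refine Prod.ext ?_ ?_
  · show Mop ((wseq n)⁻¹ • eBas n) = eBas n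
    rw [map_smul, Mop_eBas, smul_smul, inv_mul_cancel₀ (wseq_ne_zero n), one_smul]
  · show alphaF ((wseq n)⁻¹ • eBas n) = 1
    rw [map_smul, alphaF_eBas, smul_eq_mul, inv_mul_cancel₀ (wseq_ne_zero n)]

/-- The sum of the first `N` basis vectors. -/
def sN (N : ℕ) : Ell := ∑ n ∈ Finset.range N, eBas n

lemma norm_sN (N : ℕ) : ‖sN N‖ = Real.sqrt N := by
  have h := lp.norm_sum_single (p := 2) (by norm_num : (0:ℝ) < (2:ℝ≥0∞).toReal)
    (fun _ : ℕ => (1:ℝ)) (Finset.range N)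
  have h2 : ‖sN N‖ ^ (2:ℕ) = (N:ℝ) := by
    rw [← pow_eq_rpow, sN]
    simp only [eBas]
    rw [h]
    simp [pow_eq_rpow]
  have := congrArg Real.sqrt h2
  rwa [Real.sqrt_sq (norm_nonneg _)] at this

/-- The averaged approximants. -/
def gN (N : ℕ) : Ell := (N:ℝ)⁻¹ • ∑ n ∈ Finset.range N, (wseq n)⁻¹ • eBas n

/-- The target element `(0,1)`. -/
def u0 : HS := Eq2.symm (0, 1)

lemma iX_gN (N : ℕ) (hN : 1 ≤ N) : iXmap (gN N) = Eq2.symm ((N:ℝ)⁻¹ • sN N, 1) := by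
  have hNne : (N:ℝ) ≠ 0 := by positivity
  rw [gN, map_smul, map_sum]
  have hcong : ∀ n ∈ Finset.range N, iXmap ((wseq n)⁻¹ • eBas n)
      = Eq2.symm (eBas n, 1) := fun n _ => iX_basis n
  rw [Finset.sum_congr rfl hcong, ← map_sum]
  have hsum : (∑ n ∈ Finset.range N, ((eBas n, (1:ℝ)) : Ell × ℝ)) = (sN N, (N:ℝ)) := by
    refine Prod.ext ?_ ?_
    · rw [Prod.fst_sum]; rfl
    · rw [Prod.snd_sum]
      simp
  rw [hsum, ← map_smul]
  congr 1
  rw [Prod.smul_mk, smul_eq_mul, inv_mul_cancel₀ hNne]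

lemma norm_pair (a : Ell) (t : ℝ) : ‖(Eq2.symm (a, t) : HS)‖ = Real.sqrt (‖a‖^2 + t^2) := by
  rw [WithLp.prod_norm_eq_of_L2]
  norm_num [Real.norm_eq_abs, sq_abs]
  rfl

lemma diff_norm (N : ℕ) (hN : 1 ≤ N) : ‖iXmap (gN N) - u0‖ = (Real.sqrt N)⁻¹ := by
  have hNpos : (0:ℝ) < N := by exact_mod_cast hN
  rw [iX_gN N hN, u0, ← map_sub]
  have : ((( (N:ℝ)⁻¹ • sN N, (1:ℝ)) : Ell × ℝ) - ((0, 1) : Ell × ℝ))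
      = (((N:ℝ)⁻¹ • sN N, (0:ℝ)) : Ell × ℝ) := by
    rw [Prod.mk_sub_mk]
    norm_num
  have hsq : Real.sqrt N * Real.sqrt N = (N:ℝ) := Real.mul_self_sqrt (le_of_lt hNpos)
  have hs_pos : (0:ℝ) < Real.sqrt N := Real.sqrt_pos.mpr hNpos
  rw [this, norm_pair, norm_smul, norm_sN, norm_inv, Real.norm_natCast]
  have heq : ((N:ℝ)⁻¹ * Real.sqrt N) ^ 2 + (0:ℝ) ^ 2 = ((Real.sqrt N)⁻¹) ^ 2 := by
    field_simp
    nlinarith [hsq]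
  rw [heq, Real.sqrt_sq (by positivity)]

lemma tendsto_iX_gN : Filter.Tendsto (fun N => iXmap (gN N)) Filter.atTop (nhds u0) := by
  rw [tendsto_iff_norm_sub_tendsto_zero]
  have hs : Filter.Tendsto (fun N : ℕ => (Real.sqrt N)⁻¹) Filter.atTop (nhds 0) := by
    apply Filter.Tendsto.inv_tendsto_atTop
    have h1 : Filter.Tendsto (fun x : ℝ => x ^ ((1:ℝ)/2)) Filter.atTop Filter.atTop :=
      tendsto_rpow_atTop (by norm_num)
    have h2 : Filter.Tendsto Real.sqrt Filter.atTop Filter.atTop := by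
      refine h1.congr' ?_
      filter_upwards [Filter.eventually_ge_atTop (0:ℝ)] with x hx
      exact (Real.sqrt_eq_rpow x).symm
    exact h2.comp tendsto_natCast_atTop_atTop
  refine hs.congr' ?_
  filter_upwards [Filter.eventually_ge_atTop 1] with N hN
  exact (diff_norm N hN).symm

/-- The closure of the range of `iX`. -/
def Cl : Submodule ℝ HS := (LinearMap.range (iXmap : Ell →ₗ[ℝ] HS)).topologicalClosure

lemma mem_Cl_of_range {x : HS} (h : x ∈ LinearMap.range (iXmap : Ell →ₗ[ℝ] HS)) : x ∈ Cl :=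
  Submodule.le_topologicalClosure _ h

lemma isClosed_Cl : IsClosed (Cl : Set HS) := Submodule.isClosed_topologicalClosure _

lemma u0_mem_Cl : u0 ∈ Cl := by
  refine isClosed_Cl.mem_of_tendsto tendsto_iX_gN ?_
  exact Filter.Eventually.of_forall fun N => mem_Cl_of_range ⟨gN N, rfl⟩

lemma eBas_mem_Cl (n : ℕ) : (Eq2.symm ((eBas n : Ell), (0:ℝ)) : HS) ∈ Cl := by
  have h1 : (Eq2.symm (eBas n, 1) : HS) ∈ Cl :=
    mem_Cl_of_range ⟨(wseq n)⁻¹ • eBas n, iX_basis n⟩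
  have : (Eq2.symm ((eBas n : Ell), (0:ℝ)) : HS) = Eq2.symm (eBas n, 1) - u0 := by
    rw [u0, ← map_sub, Prod.mk_sub_mk]
    norm_num
  rw [this]
  exact Cl.sub_mem h1 u0_mem_Cl

lemma Tmap_single_mem_Cl (n : ℕ) (c : ℝ) : Tmap (lp.single 2 n c) ∈ Cl := by
  have hsc : lp.single 2 n c = c • eBas n := by
    rw [eBas, ← lp.single_smul]
    norm_num
  rw [Tmap_apply, hsc]
  have : (Eq2.symm ((c • eBas n : Ell), (0:ℝ)) : HS)
      = c • Eq2.symm ((eBas n : Ell), (0:ℝ)) := by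
    rw [← map_smul, Prod.smul_mk, smul_zero]
  rw [this]
  exact Cl.smul_mem c (eBas_mem_Cl n)

lemma Tmap_mem_Cl (a : Ell) : Tmap a ∈ Cl := by
  have hsum : HasSum (fun n => lp.single 2 n (a n)) a :=
    lp.hasSum_single (by norm_num) a
  have hsum2 : HasSum (fun n => Tmap (lp.single 2 n (a n))) (Tmap a) :=
    Tmap.hasSum hsum
  refine isClosed_Cl.mem_of_tendsto hsum2 ?_
  exact Filter.Eventually.of_forall fun s =>
    Submodule.sum_mem Cl fun n _ => Tmap_single_mem_Cl n (a n)

lemma Cl_eq_top : Cl = ⊤ := by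
  rw [Submodule.eq_top_iff']
  intro x
  have hx : x = Tmap (Eq2 x).1 + (Eq2 x).2 • u0 := by
    rw [Tmap_apply, u0, ← map_smul, Prod.smul_mk, smul_zero, ← map_add, Prod.mk_add_mk]
    rw [add_zero, zero_add, smul_eq_mul, mul_one]
    exact (Eq2.symm_apply_apply x).symm
  rw [hx]
  exact Cl.add_mem (Tmap_mem_Cl _) (Cl.smul_mem _ u0_mem_Cl)

lemma dense_iX : DenseRange iXmap := by
  have h : closure (Set.range iXmap) = Set.univ := by
    have h1 : (Set.range iXmap) = ((LinearMap.range (iXmap : Ell →ₗ[ℝ] HS) : Submodule ℝ HS) : Set HS) := by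
      rw [LinearMap.coe_range, ContinuousLinearMap.coe_coe]
    rw [h1, ← Submodule.topologicalClosure_coe]
    rw [show (LinearMap.range (iXmap : Ell →ₗ[ℝ] HS)).topologicalClosure = Cl from rfl, Cl_eq_top]
    rfl
  rw [DenseRange, dense_iff_closure_eq, h]

end FredholmExample

/-- There exist a real Hilbert space `H`, Banach spaces `X`, `Y` with continuous dense
injections `X ↪ Y ↪ H`, and a bounded Fredholm operator `T : X → Y` that is symmetric
with respect to the inner product of `H`, whose Fredholm index is `-1`. -/
theorem exists_symmetric_fredholm_of_index_neg_one :
    ∃ (H : Type) (_ : NormedAddCommGroup H) (_ : InnerProductSpace ℝ H)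
      (_ : CompleteSpace H)
      (X : Type) (_ : NormedAddCommGroup X) (_ : NormedSpace ℝ X) (_ : CompleteSpace X)
      (Y : Type) (_ : NormedAddCommGroup Y) (_ : NormedSpace ℝ Y) (_ : CompleteSpace Y)
      (iX : X →L[ℝ] Y) (iY : Y →L[ℝ] H) (T : X →L[ℝ] Y),
      Function.Injective iX ∧ Function.Injective iY ∧
      DenseRange iX ∧ DenseRange iY ∧
      -- Fredholm hypotheses
      FiniteDimensional ℝ (LinearMap.ker (T : X →ₗ[ℝ] Y)) ∧
      IsClosed (LinearMap.range (T : X →ₗ[ℝ] Y) : Set Y) ∧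
      FiniteDimensional ℝ (Y ⧸ LinearMap.range (T : X →ₗ[ℝ] Y)) ∧
      -- symmetry with respect to the inner product of `H`
      (∀ x₁ x₂ : X,
        (inner ℝ (iY (T x₁)) (iY (iX x₂)) : ℝ) = inner ℝ (iY (iX x₁)) (iY (T x₂))) ∧
      -- the Fredholm index is `-1`
      (Module.finrank ℝ (LinearMap.ker (T : X →ₗ[ℝ] Y)) : ℤ) -
        (Module.finrank ℝ (Y ⧸ LinearMap.range (T : X →ₗ[ℝ] Y)) : ℤ) = -1 := by
  refine ⟨HS, inferInstance, inferInstance, inferInstance,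
    Ell, inferInstance, inferInstance, inferInstance,
    HS, inferInstance, inferInstance, inferInstance,
    iXmap, ContinuousLinearMap.id ℝ HS, Tmap,
    iXmap_inj, fun a b h => h, dense_iX, denseRange_id,
    ?_, closed_range_Tmap, coker_findim, ?_, ?_⟩
  · rw [ker_Tmap]; infer_instance
  · intro x₁ x₂
    simp only [ContinuousLinearMap.id_apply]
    rw [WithLp.prod_inner_apply, WithLp.prod_inner_apply]
    simp only [WithLp.ofLp_fst, WithLp.ofLp_snd, Tmap_fst, Tmap_snd, iXmap_fst, iXmap_snd]
    rw [Mop_symm, inner_zero_left, inner_zero_right]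
  · rw [ker_finrank, coker_finrank]
    norm_num
end

section
/- Let E and F be Banach spaces. The set of bounded linear operators T : E → F that are surjective and whose kernel is complemented in E is open in the space of bounded operators with the operator norm topology. -/
/-- An operator is surjective with complemented kernel iff it has a bounded right inverse. -/
lemma exists_rightInverse_iff
    {E F : Type*} [NormedAddCommGroup E] [NormedSpace ℝ E] [CompleteSpace E]
    [NormedAddCommGroup F] [NormedSpace ℝ F] [CompleteSpace F] (T : E →L[ℝ] F) :
    (Function.Surjective T ∧ (LinearMap.ker (T : E →ₗ[ℝ] F)).ClosedComplemented) ↔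
      ∃ S : F →L[ℝ] E, T.comp S = ContinuousLinearMap.id ℝ F := by
  constructor
  · rintro ⟨hsurj, hker⟩
    obtain ⟨q, hq, hcompl⟩ := hker.exists_isClosed_isCompl
    haveI : CompleteSpace q := hq.completeSpace_coe
    set Tq : q →L[ℝ] F := T.comp q.subtypeL with hTq
    have hinj : LinearMap.ker (Tq : q →ₗ[ℝ] F) = ⊥ := by
      rw [eq_bot_iff]
      rintro ⟨x, hx⟩ hmem
      have hxk : x ∈ LinearMap.ker (T : E →ₗ[ℝ] F) := hmem
      have : x ∈ LinearMap.ker (T : E →ₗ[ℝ] F) ⊓ q := ⟨hxk, hx⟩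
      rw [hcompl.inf_eq_bot] at this
      simpa using this
    have hr : LinearMap.range (Tq : q →ₗ[ℝ] F) = ⊤ := by
      rw [eq_top_iff]
      rintro y -
      obtain ⟨x, hx⟩ := hsurj y
      obtain ⟨k, z, hk, hz, hkz⟩ := Submodule.codisjoint_iff_exists_add_eq.mp
        hcompl.codisjoint x
      refine ⟨⟨z, hz⟩, ?_⟩
      have : T x = T k + T z := by rw [← map_add, hkz]
      simp only [hTq, ContinuousLinearMap.comp_apply, Submodule.subtypeL_apply,
        Submodule.coe_subtype]
      rw [hx] at this
      simpa [(show T k = 0 from LinearMap.mem_ker.mp hk)] using this.symm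
    let e := ContinuousLinearEquiv.ofBijective Tq hinj hr
    refine ⟨q.subtypeL.comp (e.symm : F →L[ℝ] q), ?_⟩
    ext y
    have : Tq (e.symm y) = y := e.apply_symm_apply y
    simpa [Tq] using this
  · rintro ⟨S, hS⟩
    have hri : Function.RightInverse S T := fun y => by
      have := congrArg (fun f : F →L[ℝ] F => f y) hS
      simpa using this
    exact ⟨hri.surjective, T.closedComplemented_ker_of_rightInverse S hri⟩

/-- The set of bounded linear operators between Banach spaces that are surjective and
have complemented kernel is open in the operator norm topology. -/
theorem surjective_closedComplemented_ker_isOpen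
    (E F : Type*) [NormedAddCommGroup E] [NormedSpace ℝ E] [CompleteSpace E]
    [NormedAddCommGroup F] [NormedSpace ℝ F] [CompleteSpace F] :
    IsOpen {T : E →L[ℝ] F |
      Function.Surjective T ∧ (LinearMap.ker (T : E →ₗ[ℝ] F)).ClosedComplemented} := by
  rw [isOpen_iff_mem_nhds]
  intro T hT
  obtain ⟨S, hS⟩ := (exists_rightInverse_iff T).mp hT
  have hcont : Continuous fun T' : E →L[ℝ] F => T'.comp S :=
    (ContinuousLinearMap.compL ℝ F E F).flip S |>.continuous
  have hopen : IsOpen {T' : E →L[ℝ] F | IsUnit (T'.comp S)} :=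
    Units.isOpen.preimage hcont
  have hmem : T ∈ {T' : E →L[ℝ] F | IsUnit (T'.comp S)} := by
    rw [Set.mem_setOf_eq, hS]
    exact isUnit_one
  refine Filter.mem_of_superset (hopen.mem_nhds hmem) ?_
  intro T' hT'
  obtain ⟨u, hu⟩ := hT'
  refine (exists_rightInverse_iff T').mpr ⟨S.comp (↑u⁻¹ : F →L[ℝ] F), ?_⟩
  calc T'.comp (S.comp (↑u⁻¹ : F →L[ℝ] F)) = (T'.comp S).comp (↑u⁻¹ : F →L[ℝ] F) := by rw [ContinuousLinearMap.comp_assoc]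
    _ = (↑u * ↑u⁻¹ : F →L[ℝ] F) := by rw [hu]; rfl
    _ = ContinuousLinearMap.id ℝ F := by rw [← Units.val_mul, mul_inv_cancel]; rfl
end
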